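/- For any orthonormal vectors v₁, v₂, v₃, v₄ ∈ V one has |e*(v₁, v₂, v₃, v₄)| ≤ 3/(2π²). (Equivalently: the value of the Euler form e(Ω*) on any decomposable unit 4-vector tangent to the Grassmannian G_o(4,8) is at most 3/(2π²).) -/

import Mathlib

/- STATEMENT 2: On `V = Fin 4 → Fin 4 → ℝ` with the inner product making the standard
basis orthonormal, the Euler form `e* = (1/(2π²))(Ω*₁₂∧Ω*₃₄ − Ω*₁₃∧Ω*₂₄ + Ω*₁₄∧Ω*₂₃)`
satisfies `|e*(v₁,v₂,v₃,v₄)| ≤ 3/(2π²)` for any orthonormal `v₁,…,v₄`. -/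

/-- `Ω* k l (X, Y) = ∑_{i=1}^{4} (X_{ik} Y_{il} − X_{il} Y_{ik})`. -/
noncomputable def Omst (k l : Fin 4) (X Y : Fin 4 → Fin 4 → ℝ) : ℝ :=
  ∑ i : Fin 4, (X i k * Y i l - X i l * Y i k)

/-- The wedge of two alternating 2-forms, shuffle convention (six (2,2)-shuffles). -/
noncomputable def w22 (f g : (Fin 4 → Fin 4 → ℝ) → (Fin 4 → Fin 4 → ℝ) → ℝ)
    (x₁ x₂ x₃ x₄ : Fin 4 → Fin 4 → ℝ) : ℝ :=
  f x₁ x₂ * g x₃ x₄ - f x₁ x₃ * g x₂ x₄ + f x₁ x₄ * g x₂ x₃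
    + f x₂ x₃ * g x₁ x₄ - f x₂ x₄ * g x₁ x₃ + f x₃ x₄ * g x₁ x₂

/-- `e* = (1/(2π²)) (Ω*₁₂ ∧ Ω*₃₄ − Ω*₁₃ ∧ Ω*₂₄ + Ω*₁₄ ∧ Ω*₂₃)` (0-indexed). -/
noncomputable def estar (x₁ x₂ x₃ x₄ : Fin 4 → Fin 4 → ℝ) : ℝ :=
  (1 / (2 * Real.pi ^ 2)) *
    (w22 (Omst 0 1) (Omst 2 3) x₁ x₂ x₃ x₄
      - w22 (Omst 0 2) (Omst 1 3) x₁ x₂ x₃ x₄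
      + w22 (Omst 0 3) (Omst 1 2) x₁ x₂ x₃ x₄)

/-! ### Auxiliary lemmas -/

lemma cons_val_five' {α : Type*} (a b c d e f : α) : (![a,b,c,d,e,f] : Fin 6 → α) 5 = f := rfl

/-- Cauchy–Schwarz-type bound for the wedge pairing of two 6-vectors. -/
lemma cs6' (x1 x2 x3 x4 x5 x6 y1 y2 y3 y4 y5 y6 : ℝ) :
    (x1*y6 - x2*y5 + x3*y4 + x4*y3 - x5*y2 + x6*y1)^2 ≤
      (x1^2+x2^2+x3^2+x4^2+x5^2+x6^2) * (y1^2+y2^2+y3^2+y4^2+y5^2+y6^2) := by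
  nlinarith [sq_nonneg (x1*y5 + x2*y6), sq_nonneg (x1*y4 - x3*y6), sq_nonneg (x1*y3 - x4*y6),
    sq_nonneg (x1*y2 + x5*y6), sq_nonneg (x1*y1 - x6*y6),
    sq_nonneg (x2*y4 + x3*y5), sq_nonneg (x2*y3 + x4*y5), sq_nonneg (x2*y2 - x5*y5),
    sq_nonneg (x2*y1 + x6*y5),
    sq_nonneg (x3*y3 - x4*y4), sq_nonneg (x3*y2 + x5*y4), sq_nonneg (x3*y1 - x6*y4),
    sq_nonneg (x4*y2 + x5*y3), sq_nonneg (x4*y1 - x6*y3), sq_nonneg (x5*y1 + x6*y2)]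

/-- The wedge `x ∧ y ∈ Λ² ℝ⁴` of two vectors, as an element of Euclidean `ℝ⁶`. -/
noncomputable def u6 (x y : Fin 4 → ℝ) : EuclideanSpace ℝ (Fin 6) :=
  (WithLp.equiv 2 (Fin 6 → ℝ)).symm
    ![x 0 * y 1 - x 1 * y 0, x 0 * y 2 - x 2 * y 0, x 0 * y 3 - x 3 * y 0,
      x 1 * y 2 - x 2 * y 1, x 1 * y 3 - x 3 * y 1, x 2 * y 3 - x 3 * y 2]

lemma norm_u6_le (x y : Fin 4 → ℝ) :
    ‖u6 x y‖ ≤ Real.sqrt (x 0^2 + x 1^2 + x 2^2 + x 3^2) *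
      Real.sqrt (y 0^2 + y 1^2 + y 2^2 + y 3^2) := by
  rw [EuclideanSpace.norm_eq, ← Real.sqrt_mul (by positivity)]
  apply Real.sqrt_le_sqrt
  simp [u6, Fin.sum_univ_six, sq_abs, Matrix.cons_val_zero, Matrix.cons_val_one,
    Matrix.head_cons, cons_val_five']
  nlinarith [sq_nonneg (x 0*y 0 + x 1*y 1 + x 2*y 2 + x 3*y 3)]

/-- The squared norm of `∑ᵢ xᵢ ∧ yᵢ` is at most `(∑‖xᵢ‖²)(∑‖yᵢ‖²)`. -/
lemma Ble (x y : Fin 4 → Fin 4 → ℝ) :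
    (∑ i : Fin 4, (x i 0 * y i 1 - x i 1 * y i 0))^2
    + (∑ i : Fin 4, (x i 0 * y i 2 - x i 2 * y i 0))^2
    + (∑ i : Fin 4, (x i 0 * y i 3 - x i 3 * y i 0))^2
    + (∑ i : Fin 4, (x i 1 * y i 2 - x i 2 * y i 1))^2
    + (∑ i : Fin 4, (x i 1 * y i 3 - x i 3 * y i 1))^2
    + (∑ i : Fin 4, (x i 2 * y i 3 - x i 3 * y i 2))^2
    ≤ (∑ i : Fin 4, (x i 0^2 + x i 1^2 + x i 2^2 + x i 3^2))
      * (∑ i : Fin 4, (y i 0^2 + y i 1^2 + y i 2^2 + y i 3^2)) := by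
  set X : Fin 4 → ℝ := fun i => x i 0^2 + x i 1^2 + x i 2^2 + x i 3^2 with hXdef
  set Y : Fin 4 → ℝ := fun i => y i 0^2 + y i 1^2 + y i 2^2 + y i 3^2 with hYdef
  have hXnn : ∀ i, 0 ≤ X i := fun i => by simp only [hXdef]; positivity
  have hYnn : ∀ i, 0 ≤ Y i := fun i => by simp only [hYdef]; positivity
  set U := ∑ i : Fin 4, u6 (x i) (y i) with hUdef
  have h1 : ‖U‖ ≤ ∑ i : Fin 4, Real.sqrt (X i) * Real.sqrt (Y i) := by
    refine (norm_sum_le _ _).trans (Finset.sum_le_sum fun i _ => ?_)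
    exact norm_u6_le (x i) (y i)
  have h2 : (∑ i : Fin 4, Real.sqrt (X i) * Real.sqrt (Y i))^2
      ≤ (∑ i : Fin 4, X i) * (∑ i : Fin 4, Y i) := by
    refine Finset.sum_sq_le_sum_mul_sum_of_sq_eq_mul _ (fun i _ => hXnn i) (fun i _ => hYnn i)
      (fun i _ => ?_)
    rw [mul_pow, Real.sq_sqrt (hXnn i), Real.sq_sqrt (hYnn i)]
  have h3 : ‖U‖^2 ≤ (∑ i : Fin 4, X i) * (∑ i : Fin 4, Y i) :=
    le_trans (pow_le_pow_left₀ (norm_nonneg _) h1 2) h2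
  have h4 : ‖U‖^2 = (∑ i : Fin 4, (x i 0 * y i 1 - x i 1 * y i 0))^2
    + (∑ i : Fin 4, (x i 0 * y i 2 - x i 2 * y i 0))^2
    + (∑ i : Fin 4, (x i 0 * y i 3 - x i 3 * y i 0))^2
    + (∑ i : Fin 4, (x i 1 * y i 2 - x i 2 * y i 1))^2
    + (∑ i : Fin 4, (x i 1 * y i 3 - x i 3 * y i 1))^2
    + (∑ i : Fin 4, (x i 2 * y i 3 - x i 3 * y i 2))^2 := by
    rw [EuclideanSpace.norm_eq, Real.sq_sqrt (by positivity)]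
    simp only [hUdef, Fin.sum_univ_four, u6, Fin.sum_univ_six]
    simp [PiLp.add_apply, WithLp.equiv_symm_apply, PiLp.toLp_apply, sq_abs, Matrix.cons_val_zero,
      Matrix.cons_val_one, Matrix.head_cons, cons_val_five']
    try ring
  linarith [h3, h4.ge, h4.le]

theorem stmt_2 (v : Fin 4 → (Fin 4 → Fin 4 → ℝ))
    (hv : ∀ a b, (∑ i : Fin 4, ∑ k : Fin 4, v a i k * v b i k) = if a = b then 1 else 0) :
    |estar (v 0) (v 1) (v 2) (v 3)| ≤ 3 / (2 * Real.pi ^ 2) := by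
  -- column "masses"
  set S : Fin 4 → ℝ :=
    fun k => ∑ i : Fin 4, ((v 0 i k)^2 + (v 1 i k)^2 + (v 2 i k)^2 + (v 3 i k)^2) with hSdef
  have hSnn : ∀ k, 0 ≤ S k := fun k => by simp only [hSdef]; positivity
  have hS4 : S 0 + S 1 + S 2 + S 3 = 4 := by
    have h0 := hv 0 0; have h1 := hv 1 1; have h2 := hv 2 2; have h3 := hv 3 3
    norm_num [Fin.sum_univ_four] at h0 h1 h2 h3
    simp only [hSdef, Fin.sum_univ_four]
    linear_combination h0 + h1 + h2 + h3
  -- the matrix of values of Ω*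
  set o : Fin 4 → Fin 4 → Fin 4 → Fin 4 → ℝ := fun k l a b => Omst k l (v a) (v b) with ho
  -- squared norms of the bivectors β_{kl}
  have hB : ∀ k l, (o k l 0 1)^2 + (o k l 0 2)^2 + (o k l 0 3)^2
      + (o k l 1 2)^2 + (o k l 1 3)^2 + (o k l 2 3)^2 ≤ S k * S l := by
    intro k l
    have h := Ble (fun i a => v a i k) (fun i a => v a i l)
    have e : ∀ a b : Fin 4, (∑ i : Fin 4, (v a i k * v b i l - v b i k * v a i l)) = o k l a b := by
      intro a b
      simp only [ho, Omst]
      exact Finset.sum_congr rfl (fun i _ => by ring)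
    rw [e 0 1, e 0 2, e 0 3, e 1 2, e 1 3, e 2 3] at h
    simpa only [hSdef] using h
  -- Cauchy–Schwarz for the wedge pairing
  have hQ : ∀ k l m n : Fin 4,
      (w22 (Omst k l) (Omst m n) (v 0) (v 1) (v 2) (v 3))^2 ≤
        ((o k l 0 1)^2 + (o k l 0 2)^2 + (o k l 0 3)^2
          + (o k l 1 2)^2 + (o k l 1 3)^2 + (o k l 2 3)^2) *
        ((o m n 0 1)^2 + (o m n 0 2)^2 + (o m n 0 3)^2
          + (o m n 1 2)^2 + (o m n 1 3)^2 + (o m n 2 3)^2) := by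
    intro k l m n
    have := cs6' (o k l 0 1) (o k l 0 2) (o k l 0 3) (o k l 1 2) (o k l 1 3) (o k l 2 3)
      (o m n 0 1) (o m n 0 2) (o m n 0 3) (o m n 1 2) (o m n 1 3) (o m n 2 3)
    simpa only [w22, ho] using this
  have hBnn : ∀ k l, (0:ℝ) ≤ (o k l 0 1)^2 + (o k l 0 2)^2 + (o k l 0 3)^2
      + (o k l 1 2)^2 + (o k l 1 3)^2 + (o k l 2 3)^2 := fun k l => by positivity
  -- AM–GM: S0 S1 S2 S3 ≤ 1
  have hP : S 0 * S 1 * S 2 * S 3 ≤ 1 := by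
    have h0 := hSnn 0; have h1 := hSnn 1; have h2 := hSnn 2; have h3 := hSnn 3
    have e1 : S 0 * S 1 ≤ ((S 0 + S 1)/2)^2 := by nlinarith [sq_nonneg (S 0 - S 1)]
    have e2 : S 2 * S 3 ≤ ((S 2 + S 3)/2)^2 := by nlinarith [sq_nonneg (S 2 - S 3)]
    have hp : (0:ℝ) ≤ (S 0 + S 1)/2 := by linarith
    have hq : (0:ℝ) ≤ (S 2 + S 3)/2 := by linarith
    have hpq : ((S 0 + S 1)/2) * ((S 2 + S 3)/2) ≤ 1 := by
      nlinarith [sq_nonneg (S 0 + S 1 - S 2 - S 3)]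
    have h12 : (S 0 * S 1) * (S 2 * S 3) ≤ ((S 0 + S 1)/2)^2 * ((S 2 + S 3)/2)^2 :=
      mul_le_mul e1 e2 (mul_nonneg h2 h3) (sq_nonneg _)
    nlinarith [mul_nonneg hp hq, h12, hpq]
  -- each of the three wedge terms is at most 1 in absolute value
  have key : ∀ k l m n : Fin 4,
      (w22 (Omst k l) (Omst m n) (v 0) (v 1) (v 2) (v 3))^2 ≤ (S k * S l) * (S m * S n) := by
    intro k l m n
    refine (hQ k l m n).trans ?_
    exact mul_le_mul (hB k l) (hB m n) (hBnn m n) (mul_nonneg (hSnn k) (hSnn l))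
  have habs : ∀ (k l m n : Fin 4), (S k * S l) * (S m * S n) = S 0 * S 1 * S 2 * S 3 →
      |w22 (Omst k l) (Omst m n) (v 0) (v 1) (v 2) (v 3)| ≤ 1 := by
    intro k l m n hperm
    have h := key k l m n
    rw [hperm] at h
    have h2 : (w22 (Omst k l) (Omst m n) (v 0) (v 1) (v 2) (v 3))^2 ≤ 1 := h.trans hP
    exact abs_le.mpr ⟨by nlinarith, by nlinarith⟩
  have hw1 := habs 0 1 2 3 (by ring)
  have hw2 := habs 0 2 1 3 (by ring)
  have hw3 := habs 0 3 1 2 (by ring)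
  -- assemble
  have hsum : |w22 (Omst 0 1) (Omst 2 3) (v 0) (v 1) (v 2) (v 3)
      - w22 (Omst 0 2) (Omst 1 3) (v 0) (v 1) (v 2) (v 3)
      + w22 (Omst 0 3) (Omst 1 2) (v 0) (v 1) (v 2) (v 3)| ≤ 3 := by
    have := abs_add_le (w22 (Omst 0 1) (Omst 2 3) (v 0) (v 1) (v 2) (v 3)
      - w22 (Omst 0 2) (Omst 1 3) (v 0) (v 1) (v 2) (v 3))
      (w22 (Omst 0 3) (Omst 1 2) (v 0) (v 1) (v 2) (v 3))
    have h2 := abs_sub (w22 (Omst 0 1) (Omst 2 3) (v 0) (v 1) (v 2) (v 3))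
      (w22 (Omst 0 2) (Omst 1 3) (v 0) (v 1) (v 2) (v 3))
    linarith
  have hπ : (0:ℝ) < 1 / (2 * Real.pi ^ 2) := by positivity
  rw [estar, abs_mul, abs_of_pos hπ]
  calc (1 / (2 * Real.pi ^ 2)) * |w22 (Omst 0 1) (Omst 2 3) (v 0) (v 1) (v 2) (v 3)
      - w22 (Omst 0 2) (Omst 1 3) (v 0) (v 1) (v 2) (v 3)
      + w22 (Omst 0 3) (Omst 1 2) (v 0) (v 1) (v 2) (v 3)|
      ≤ (1 / (2 * Real.pi ^ 2)) * 3 := by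
        exact mul_le_mul_of_nonneg_left hsum hπ.le
    _ = 3 / (2 * Real.pi ^ 2) := by ring
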